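/- Let H be a real inner product space, D ⊆ H a linear subspace, and L : D → H a linear map which is symmetric on D, i.e. ⟨Lx, y⟩ = ⟨x, Ly⟩ for all x, y ∈ D. Suppose R ∈ D with R ≠ 0, suppose u ∈ D satisfies L u = R with ⟨u, R⟩ > 0, and suppose ⟨L R, R⟩ ≤ 0. Then the vector f := u − (⟨u, R⟩/‖R‖²) R belongs to D, satisfies ⟨f, R⟩ = 0, and ⟨L f, f⟩ < 0. -/

import Mathlib

open RealInnerProductSpace

/-- The algebraic core of the Vakhitov–Kolokolov instability criterion: if `L` is
symmetric on `D`, `Lu = R` with `⟨u,R⟩ > 0`, and `⟨LR,R⟩ ≤ 0`, then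
`f = u − (⟨u,R⟩/‖R‖²)R` is orthogonal to `R` and `⟨Lf,f⟩ < 0`. -/
theorem vk_negative_direction {H : Type*} [NormedAddCommGroup H] [InnerProductSpace ℝ H]
    (D : Submodule ℝ H) (L : D →ₗ[ℝ] H)
    (hsym : ∀ x y : D, ⟪L x, (y : H)⟫ = ⟪(x : H), L y⟫)
    (R : D) (hR : (R : H) ≠ 0)
    (u : D) (hu : L u = (R : H)) (huR : 0 < ⟪(u : H), (R : H)⟫)
    (hLR : ⟪L R, (R : H)⟫ ≤ 0) :
    ⟪((u - (⟪(u : H), (R : H)⟫ / ‖(R : H)‖ ^ 2) • R : D) : H), (R : H)⟫ = 0 ∧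
    ⟪L (u - (⟪(u : H), (R : H)⟫ / ‖(R : H)‖ ^ 2) • R),
      ((u - (⟪(u : H), (R : H)⟫ / ‖(R : H)‖ ^ 2) • R : D) : H)⟫ < 0 := by
  set c : ℝ := ⟪(u : H), (R : H)⟫ / ‖(R : H)‖ ^ 2 with hc
  have hRR : ⟪(R : H), (R : H)⟫ = ‖(R : H)‖ ^ 2 := real_inner_self_eq_norm_sq _
  have hnorm : ‖(R : H)‖ ^ 2 ≠ 0 := pow_ne_zero _ (norm_ne_zero_iff.mpr hR)
  have hcRR : c * ‖(R : H)‖ ^ 2 = ⟪(u : H), (R : H)⟫ := by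
    rw [hc, div_mul_cancel₀ _ hnorm]
  have hLRu : ⟪L R, (u : H)⟫ = ‖(R : H)‖ ^ 2 := by
    rw [hsym, hu, hRR]
  have hRu : ⟪(R : H), (u : H)⟫ = ⟪(u : H), (R : H)⟫ := real_inner_comm _ _
  constructor
  · push_cast
    simp only [inner_sub_left, real_inner_smul_left, hRR, hcRR, sub_self]
  · have hL : L (u - c • R) = (R : H) - c • L R := by
      rw [map_sub, map_smul, hu]
    rw [hL]
    push_cast
    simp only [inner_sub_left, inner_sub_right, real_inner_smul_left,
      real_inner_smul_right, hRR, hRu, hLRu]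
    have hc0 : 0 < c := div_pos huR (by positivity)
    nlinarith [hcRR, hLR, huR, mul_pos hc0 hc0]
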